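/- Let X_1,…,X_n be jointly distributed {±1}-valued random variables. Then for any ℓ ∈ [n], there exists a subset S ⊆ [n] with |S| ≤ ℓ such that E_{X_S} E_{{u,v} ∼ Unif([n] choose 2)} [Cov(X_u, X_v | X_S)²] ≤ 8 log(2) / ℓ, where the outer expectation is over the random value of X_S and the inner expectation is over a uniformly random unordered pair {u,v} of distinct indices. -/

import Mathlib

open Finset

noncomputable section
open scoped Classical

/-- The ±1 value of a Boolean spin. -/
def spin (b : Bool) : ℝ := if b then 1 else -1

/-- A probability mass function on a finite type. -/
def IsDist {Ω : Type*} [Fintype Ω] (μ : Ω → ℝ) : Prop :=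
  (∀ x, 0 ≤ μ x) ∧ ∑ x, μ x = 1

/-- Marginal probability that the coordinates in `S` agree with `y`. -/
def marg {n : ℕ} (μ : (Fin n → Bool) → ℝ) (S : Finset (Fin n)) (y : Fin n → Bool) : ℝ :=
  ∑ x : Fin n → Bool, if ∀ i ∈ S, x i = y i then μ x else 0

/-- Canonical representatives of assignments to the coordinates in `S`. -/
def reps {n : ℕ} (S : Finset (Fin n)) : Finset (Fin n → Bool) :=
  Finset.univ.filter fun y => ∀ i ∉ S, y i = false

/-- Conditional expectation `E[f(X) | X_S = y_S]`. -/
def condExp' {n : ℕ} (μ : (Fin n → Bool) → ℝ) (S : Finset (Fin n)) (y : Fin n → Bool)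
    (f : (Fin n → Bool) → ℝ) : ℝ :=
  (∑ x : Fin n → Bool, if ∀ i ∈ S, x i = y i then μ x * f x else 0) / marg μ S y

/-- Conditional covariance `Cov(X_u, X_v | X_S = y_S)`. -/
def condCov {n : ℕ} (μ : (Fin n → Bool) → ℝ) (S : Finset (Fin n)) (y : Fin n → Bool)
    (u v : Fin n) : ℝ :=
  condExp' μ S y (fun x => spin (x u) * spin (x v))
    - condExp' μ S y (fun x => spin (x u)) * condExp' μ S y (fun x => spin (x v))

/-- The ordered representatives of unordered pairs of distinct indices. -/
def pairs (n : ℕ) : Finset (Fin n × Fin n) :=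
  Finset.univ.filter fun p => p.1 < p.2

/-- conditional (unnormalized) sum -/
def cs {n : ℕ} (μ : (Fin n → Bool) → ℝ) (S : Finset (Fin n)) (y : Fin n → Bool)
    (f : (Fin n → Bool) → ℝ) : ℝ :=
  ∑ x : Fin n → Bool, if ∀ i ∈ S, x i = y i then μ x * f x else 0

variable {n : ℕ} {μ : (Fin n → Bool) → ℝ} {S : Finset (Fin n)} {y : Fin n → Bool}
  {f : (Fin n → Bool) → ℝ} {u v : Fin n}


lemma core (mt mf At Af : ℝ) (hmt : 0 ≤ mt) (hmf : 0 ≤ mf)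
    (ht : mt = 0 → At = 0) (hf : mf = 0 → Af = 0) :
    (mt+mf) * ((At-Af)/(mt+mf) - ((mt-mf)/(mt+mf))*((At+Af)/(mt+mf)))^2
      ≤ (mt+mf)*(1 - ((At+Af)/(mt+mf))^2)
        - (mt*(1 - (At/mt)^2) + mf*(1 - (Af/mf)^2)) := by
  rcases eq_or_lt_of_le hmt with h1 | h1
  · have hAt : At = 0 := ht h1.symm
    subst hAt
    rcases eq_or_lt_of_le hmf with h2 | h2
    · have hAf : Af = 0 := hf h2.symm
      subst hAf
      simp [← h1, ← h2]
    · have hmf' : mf ≠ 0 := ne_of_gt h2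
      rw [← h1]
      have e1 : ((0:ℝ)+mf) * ((0-Af)/(0+mf) - ((0-mf)/(0+mf))*((0+Af)/(0+mf)))^2 = 0 := by
        field_simp
        ring
      have e2 : ((0:ℝ)+mf)*(1 - ((0+Af)/(0+mf))^2)
          - ((0:ℝ)*(1 - ((0:ℝ)/(0:ℝ))^2) + mf*(1 - (Af/mf)^2)) = 0 := by
        field_simp
        ring
      rw [e1, e2]
  · rcases eq_or_lt_of_le hmf with h2 | h2
    · have hAf : Af = 0 := hf h2.symm
      subst hAf
      have hmt' : mt ≠ 0 := ne_of_gt h1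
      rw [← h2]
      have e1 : (mt+(0:ℝ)) * ((At-0)/(mt+0) - ((mt-0)/(mt+0))*((At+0)/(mt+0)))^2 = 0 := by
        field_simp
        ring
      have e2 : (mt+(0:ℝ))*(1 - ((At+0)/(mt+0))^2)
          - (mt*(1 - (At/mt)^2) + (0:ℝ)*(1 - ((0:ℝ)/(0:ℝ))^2)) = 0 := by
        field_simp
        ring
      rw [e1, e2]
    · have hmt' : mt ≠ 0 := ne_of_gt h1
      have hmf' : mf ≠ 0 := ne_of_gt h2
      have hm : mt + mf ≠ 0 := by positivity
      rw [← sub_nonneg]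
      have key : (mt+mf)*(1 - ((At+Af)/(mt+mf))^2)
          - (mt*(1 - (At/mt)^2) + mf*(1 - (Af/mf)^2))
          - (mt+mf) * ((At-Af)/(mt+mf) - ((mt-mf)/(mt+mf))*((At+Af)/(mt+mf)))^2
          = ((At*mf - Af*mt)*(mt-mf))^2 / (mt*mf*(mt+mf)^3) := by
        field_simp
        ring
      rw [key]
      positivity

lemma condExp'_eq : condExp' μ S y f = cs μ S y f / marg μ S y := rfl

lemma marg_eq_cs : marg μ S y = cs μ S y (fun _ => 1) := by
  simp [marg, cs]

lemma marg_nonneg (hpos : ∀ x, 0 ≤ μ x) : 0 ≤ marg μ S y := by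
  apply Finset.sum_nonneg
  intro x _
  split
  · exact hpos x
  · exact le_rfl

lemma cs_eq_zero (hpos : ∀ x, 0 ≤ μ x) (hm : marg μ S y = 0) : cs μ S y f = 0 := by
  have h := (Finset.sum_eq_zero_iff_of_nonneg (by
    intro x _; split
    · exact hpos x
    · exact le_rfl)).1 hm
  apply Finset.sum_eq_zero
  intro x hx
  split_ifs with hmatch
  · have := h x (mem_univ x)
    rw [if_pos hmatch] at this
    rw [this, zero_mul]
  · rfl

lemma abs_spin (b : Bool) : |spin b| = 1 := by
  cases b <;> simp [spin]

lemma abs_cs_le (hpos : ∀ x, 0 ≤ μ x) (hf : ∀ x, |f x| ≤ 1) :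
    |cs μ S y f| ≤ marg μ S y := by
  calc |cs μ S y f| ≤ ∑ x : Fin n → Bool, |if ∀ i ∈ S, x i = y i then μ x * f x else 0| :=
        Finset.abs_sum_le_sum_abs _ _
    _ ≤ marg μ S y := by
        apply Finset.sum_le_sum
        intro x _
        split_ifs with h
        · rw [abs_mul, abs_of_nonneg (hpos x)]
          calc μ x * |f x| ≤ μ x * 1 := by
                exact mul_le_mul_of_nonneg_left (hf x) (hpos x)
            _ = μ x := mul_one _
        · simp

lemma abs_condExp'_le (hpos : ∀ x, 0 ≤ μ x) (hf : ∀ x, |f x| ≤ 1) :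
    |condExp' μ S y f| ≤ 1 := by
  rcases eq_or_lt_of_le (marg_nonneg (S := S) (y := y) hpos) with h | h
  · rw [condExp'_eq, ← h, div_zero, abs_zero]; norm_num
  · rw [condExp'_eq, abs_div, abs_of_pos h, div_le_one h]
    exact abs_cs_le hpos hf

/-- partition lemma -/
lemma sum_marg : ∑ y ∈ reps S, marg μ S y = ∑ x, μ x := by
  unfold marg
  rw [Finset.sum_comm]
  apply Finset.sum_congr rfl
  intro x _
  set y₀ : Fin n → Bool := fun i => if i ∈ S then x i else false with hy₀
  have hy₀mem : y₀ ∈ reps S := by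
    simp only [reps, mem_filter, mem_univ, true_and]
    intro i hi
    simp [hy₀, hi]
  rw [Finset.sum_eq_single_of_mem y₀ hy₀mem]
  · rw [if_pos]
    intro i hi
    simp [hy₀, hi]
  · intro y hy hne
    rw [if_neg]
    intro hmatch
    apply hne
    funext i
    by_cases hi : i ∈ S
    · rw [← hmatch i hi]; simp [hy₀, hi]
    · simp only [reps, mem_filter] at hy
      rw [hy.2 i hi]; simp [hy₀, hi]

lemma cond_insert (hu : u ∉ S) (b : Bool) (x : Fin n → Bool) :
    (∀ i ∈ insert u S, x i = Function.update y u b i) ↔ (x u = b ∧ ∀ i ∈ S, x i = y i) := by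
  rw [Finset.forall_mem_insert, Function.update_self]
  refine and_congr Iff.rfl (forall₂_congr fun i hi => ?_)
  rw [Function.update_of_ne (by rintro rfl; exact hu hi)]

lemma cs_split (hu : u ∉ S) (f : (Fin n → Bool) → ℝ) :
    cs μ S y f = cs μ (insert u S) (Function.update y u true) f
      + cs μ (insert u S) (Function.update y u false) f := by
  unfold cs
  rw [← Finset.sum_add_distrib]
  apply Finset.sum_congr rfl
  intro x _
  simp only [cond_insert hu]
  cases hxu : x u <;> by_cases hm : ∀ i ∈ S, x i = y i <;> simp [hxu, hm]

lemma cs_mul_spin (hu : u ∉ S) (f : (Fin n → Bool) → ℝ) :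
    cs μ S y (fun x => spin (x u) * f x)
      = cs μ (insert u S) (Function.update y u true) f
        - cs μ (insert u S) (Function.update y u false) f := by
  unfold cs
  rw [← Finset.sum_sub_distrib]
  apply Finset.sum_congr rfl
  intro x _
  simp only [cond_insert hu]
  cases hxu : x u <;> by_cases hm : ∀ i ∈ S, x i = y i <;>
      simp [hxu, hm, spin, apply_ite Neg.neg] <;>
    simp only [if_pos hm]

lemma update_self_of_reps (hu : u ∉ S) (hy : y ∈ reps S) :
    Function.update y u false = y := by
  have : y u = false := by
    simp only [reps, mem_filter] at hy
    exact hy.2 u hu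
  conv_lhs => rw [← this]
  exact Function.update_eq_self u y

lemma sum_reps_insert (hu : u ∉ S) (g : (Fin n → Bool) → ℝ) :
    ∑ y' ∈ reps (insert u S), g y'
      = ∑ y ∈ reps S, (g (Function.update y u true) + g (Function.update y u false)) := by
  have h0 : ∀ y ∈ reps S, (g (Function.update y u true) + g (Function.update y u false))
      = ∑ b : Bool, g (Function.update y u b) := by
    intro y _
    rw [Fintype.sum_bool]
  rw [Finset.sum_congr rfl h0, ← Finset.sum_product']
  refine Finset.sum_nbij' (i := fun y' => (Function.update y' u false, y' u))
    (j := fun p => Function.update p.1 u p.2) ?_ ?_ ?_ ?_ ?_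
  · intro y' hy'
    simp only [reps, mem_filter, mem_univ, true_and, Finset.mem_product] at hy' ⊢
    refine ⟨?_, trivial⟩
    intro i hi
    rcases eq_or_ne i u with rfl | hne
    · rw [Function.update_self]
    · rw [Function.update_of_ne hne]
      exact hy' i (by simp [hne, hi])
  · intro p hp
    simp only [reps, mem_filter, mem_univ, true_and, Finset.mem_product] at hp ⊢
    intro i hi
    simp only [Finset.mem_insert, not_or] at hi
    rw [Function.update_of_ne hi.1]
    exact hp.1 i hi.2
  · intro y' _
    simp only
    rw [Function.update_idem, Function.update_eq_self]
  · intro p hp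
    simp only [Finset.mem_product] at hp
    ext : 1
    · simp only [Function.update_idem]
      exact update_self_of_reps hu hp.1
    · simp only [Function.update_self]
  · intro y' _
    simp only
    rw [Function.update_idem, Function.update_eq_self]

lemma cs_spin_mem (hu : u ∈ S) (f : (Fin n → Bool) → ℝ) :
    cs μ S y (fun x => spin (x u) * f x) = spin (y u) * cs μ S y f := by
  unfold cs
  rw [Finset.mul_sum]
  apply Finset.sum_congr rfl
  intro x _
  split_ifs with h
  · show μ x * (spin (x u) * f x) = spin (y u) * (μ x * f x)
    rw [h u hu]; ring
  · rw [mul_zero]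

lemma condCov_mem_zero (hu : u ∈ S) : condCov μ S y u v = 0 := by
  rcases eq_or_ne (marg μ S y) 0 with h | h
  · simp [condCov, condExp'_eq, h]
  · have h1 : cs μ S y (fun x => spin (x u) * spin (x v))
        = spin (y u) * cs μ S y (fun x => spin (x v)) := cs_spin_mem hu _
    have h2 : cs μ S y (fun x => spin (x u)) = spin (y u) * marg μ S y := by
      have := cs_spin_mem (μ := μ) (y := y) hu (fun _ => 1)
      simpa [marg_eq_cs] using this
    simp only [condCov, condExp'_eq, h1, h2]
    field_simp
    ring

/-- single-coordinate, single-representative step inequality -/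
lemma step_y (hpos : ∀ x, 0 ≤ μ x) (hu : u ∉ S) :
    marg μ S y * (condCov μ S y u v)^2
      ≤ marg μ S y * (1 - (condExp' μ S y (fun x => spin (x v)))^2)
        - (marg μ (insert u S) (Function.update y u true) *
            (1 - (condExp' μ (insert u S) (Function.update y u true) (fun x => spin (x v)))^2)
          + marg μ (insert u S) (Function.update y u false) *
            (1 - (condExp' μ (insert u S) (Function.update y u false) (fun x => spin (x v)))^2)) := by
  set mt := marg μ (insert u S) (Function.update y u true) with hmt_def
  set mf := marg μ (insert u S) (Function.update y u false) with hmf_def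
  set At := cs μ (insert u S) (Function.update y u true) (fun x => spin (x v)) with hAt_def
  set Af := cs μ (insert u S) (Function.update y u false) (fun x => spin (x v)) with hAf_def
  have hm : marg μ S y = mt + mf := by
    rw [marg_eq_cs, hmt_def, hmf_def, marg_eq_cs, marg_eq_cs]
    exact cs_split hu _
  have hA : cs μ S y (fun x => spin (x v)) = At + Af := by
    rw [hAt_def, hAf_def]
    exact cs_split hu _
  have hsu : cs μ S y (fun x => spin (x u)) = mt - mf := by
    have : cs μ S y (fun x => spin (x u) * 1) = mt - mf := by
      rw [hmt_def, hmf_def, marg_eq_cs, marg_eq_cs]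
      exact cs_mul_spin hu _
    simpa using this
  have hsuv : cs μ S y (fun x => spin (x u) * spin (x v)) = At - Af :=
    cs_mul_spin hu _
  have hcov : condCov μ S y u v
      = (At-Af)/(mt+mf) - ((mt-mf)/(mt+mf))*((At+Af)/(mt+mf)) := by
    rw [condCov, condExp'_eq, condExp'_eq, condExp'_eq, hsuv, hsu, hA, hm]
  have hEv : condExp' μ S y (fun x => spin (x v)) = (At+Af)/(mt+mf) := by
    rw [condExp'_eq, hA, hm]
  have hEt : condExp' μ (insert u S) (Function.update y u true) (fun x => spin (x v))
      = At/mt := by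
    rw [condExp'_eq, ← hAt_def, ← hmt_def]
  have hEf : condExp' μ (insert u S) (Function.update y u false) (fun x => spin (x v))
      = Af/mf := by
    rw [condExp'_eq, ← hAf_def, ← hmf_def]
  rw [hcov, hEv, hEt, hEf, hm]
  exact core mt mf At Af (marg_nonneg hpos) (marg_nonneg hpos)
    (fun h => cs_eq_zero hpos h) (fun h => cs_eq_zero hpos h)

/-- the per-coordinate potential -/
def Wv (μ : (Fin n → Bool) → ℝ) (S : Finset (Fin n)) (v : Fin n) : ℝ :=
  ∑ y ∈ reps S, marg μ S y * (1 - (condExp' μ S y (fun x => spin (x v)))^2)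

lemma Wv_nonneg (hpos : ∀ x, 0 ≤ μ x) : 0 ≤ Wv μ S v := by
  apply Finset.sum_nonneg
  intro y _
  apply mul_nonneg (marg_nonneg hpos)
  have h := abs_condExp'_le (S := S) (y := y) hpos
    (f := fun x => spin (x v)) (fun x => le_of_eq (abs_spin _))
  nlinarith [abs_nonneg (condExp' μ S y (fun x => spin (x v))),
    sq_abs (condExp' μ S y (fun x => spin (x v)))]

lemma Wv_le_one (hpos : ∀ x, 0 ≤ μ x) (hsum : ∑ x, μ x = 1) : Wv μ S v ≤ 1 := by
  calc Wv μ S v ≤ ∑ y ∈ reps S, marg μ S y := by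
        apply Finset.sum_le_sum
        intro y _
        nlinarith [marg_nonneg (S := S) (y := y) hpos,
          sq_nonneg (condExp' μ S y (fun x => spin (x v)))]
    _ = 1 := by rw [sum_marg, hsum]

/-- summed step inequality -/
lemma step_sum (hpos : ∀ x, 0 ≤ μ x) (S : Finset (Fin n)) (u v : Fin n) :
    ∑ y ∈ reps S, marg μ S y * (condCov μ S y u v)^2
      ≤ Wv μ S v - Wv μ (insert u S) v := by
  by_cases hu : u ∈ S
  · rw [Finset.insert_eq_self.2 hu, sub_self]
    apply le_of_eq
    apply Finset.sum_eq_zero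
    intro y _
    rw [condCov_mem_zero hu]
    ring
  · unfold Wv
    rw [sum_reps_insert hu, ← Finset.sum_sub_distrib]
    apply Finset.sum_le_sum
    intro y _
    exact step_y hpos hu

def Wsum (μ : (Fin n → Bool) → ℝ) (S : Finset (Fin n)) : ℝ := ∑ v, Wv μ S v

def Dsum (μ : (Fin n → Bool) → ℝ) (S : Finset (Fin n)) : ℝ :=
  ∑ u, ∑ v, ∑ y ∈ reps S, marg μ S y * (condCov μ S y u v)^2

lemma Wsum_nonneg (hpos : ∀ x, 0 ≤ μ x) : 0 ≤ Wsum μ S :=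
  Finset.sum_nonneg fun _ _ => Wv_nonneg hpos

lemma Wsum_le (hpos : ∀ x, 0 ≤ μ x) (hsum : ∑ x, μ x = 1) : Wsum μ S ≤ n := by
  calc Wsum μ S ≤ ∑ _v : Fin n, (1:ℝ) := Finset.sum_le_sum fun v _ => Wv_le_one hpos hsum
    _ = n := by simp

lemma Dsum_nonneg (hpos : ∀ x, 0 ≤ μ x) : 0 ≤ Dsum μ S := by
  apply Finset.sum_nonneg; intro u _
  apply Finset.sum_nonneg; intro v _
  apply Finset.sum_nonneg; intro y _
  exact mul_nonneg (marg_nonneg hpos) (sq_nonneg _)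

lemma Dsum_le (hpos : ∀ x, 0 ≤ μ x) (S : Finset (Fin n)) :
    Dsum μ S ≤ n * Wsum μ S - ∑ u, Wsum μ (insert u S) := by
  have h : Dsum μ S ≤ ∑ u : Fin n, (Wsum μ S - Wsum μ (insert u S)) := by
    apply Finset.sum_le_sum
    intro u _
    have h2 : ∑ v, ∑ y ∈ reps S, marg μ S y * (condCov μ S y u v)^2
        ≤ ∑ v, (Wv μ S v - Wv μ (insert u S) v) :=
      Finset.sum_le_sum fun v _ => step_sum hpos S u v
    calc ∑ v, ∑ y ∈ reps S, marg μ S y * (condCov μ S y u v)^2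
        ≤ ∑ v, (Wv μ S v - Wv μ (insert u S) v) := h2
      _ = Wsum μ S - Wsum μ (insert u S) := by
          rw [Finset.sum_sub_distrib]; rfl
  calc Dsum μ S ≤ ∑ u : Fin n, (Wsum μ S - Wsum μ (insert u S)) := h
    _ = n * Wsum μ S - ∑ u, Wsum μ (insert u S) := by
        rw [Finset.sum_sub_distrib, Finset.sum_const, Finset.card_univ, Fintype.card_fin,
          nsmul_eq_mul]

lemma exists_pick (hpos : ∀ x, 0 ≤ μ x) (hn : 0 < n) (S : Finset (Fin n)) :
    ∃ u : Fin n, Wsum μ (insert u S) ≤ Wsum μ S - Dsum μ S / n := by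
  by_contra hcon
  push_neg at hcon
  have h1 : ∑ u : Fin n, (Wsum μ S - Dsum μ S / n) < ∑ u, Wsum μ (insert u S) :=
    Finset.sum_lt_sum_of_nonempty (Finset.univ_nonempty_iff.2 ⟨⟨0, hn⟩⟩) fun u _ => hcon u
  rw [Finset.sum_const, Finset.card_univ, Fintype.card_fin, nsmul_eq_mul] at h1
  have h2 := Dsum_le hpos S
  have hn' : (n:ℝ) ≠ 0 := Nat.cast_ne_zero.2 hn.ne'
  have : (n:ℝ) * (Wsum μ S - Dsum μ S / n) = n * Wsum μ S - Dsum μ S := by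
    field_simp
  linarith [this ▸ h1]

lemma exists_small (hpos : ∀ x, 0 ≤ μ x) (hsum : ∑ x, μ x = 1) (ℓ : ℕ)
    (hl1 : 1 ≤ ℓ) (hn : 0 < n) :
    ∃ S : Finset (Fin n), S.card ≤ ℓ ∧ Dsum μ S ≤ (n:ℝ)^2 / ℓ := by
  have hl0 : (0:ℝ) < ℓ := by exact_mod_cast hl1
  have hn0 : (0:ℝ) < n := by exact_mod_cast hn
  have claim : ∀ k : ℕ, ∃ S : Finset (Fin n), S.card ≤ k ∧
      (Dsum μ S ≤ (n:ℝ)^2 / ℓ ∨ Wsum μ S ≤ n - k * ((n:ℝ)/ℓ)) := by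
    intro k
    induction k with
    | zero =>
      refine ⟨∅, le_rfl, Or.inr ?_⟩
      simp only [Nat.cast_zero, zero_mul, sub_zero]
      exact Wsum_le hpos hsum
    | succ k ih =>
      obtain ⟨S, hcard, h⟩ := ih
      rcases h with h | h
      · exact ⟨S, hcard.trans (Nat.le_succ k), Or.inl h⟩
      by_cases hD : Dsum μ S ≤ (n:ℝ)^2 / ℓ
      · exact ⟨S, hcard.trans (Nat.le_succ k), Or.inl hD⟩
      push_neg at hD
      obtain ⟨u, hu⟩ := exists_pick hpos hn S
      refine ⟨insert u S, ?_, Or.inr ?_⟩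
      · exact (Finset.card_insert_le u S).trans (Nat.succ_le_succ hcard)
      · have hstep : (n:ℝ)/ℓ ≤ Dsum μ S / n := by
          rw [div_le_div_iff₀ hl0 hn0]
          have : (n:ℝ)^2 / ℓ * ℓ ≤ Dsum μ S * ℓ :=
            mul_le_mul_of_nonneg_right hD.le hl0.le
          calc (n:ℝ) * n = (n:ℝ)^2 / ℓ * ℓ := by field_simp
            _ ≤ Dsum μ S * ℓ := this
        push_cast
        calc Wsum μ (insert u S) ≤ Wsum μ S - Dsum μ S / n := hu
          _ ≤ (n - k * ((n:ℝ)/ℓ)) - (n:ℝ)/ℓ := by linarith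
          _ = n - ((k:ℝ) + 1) * ((n:ℝ)/ℓ) := by ring
  obtain ⟨S, hcard, h⟩ := claim ℓ
  refine ⟨S, hcard, ?_⟩
  rcases h with h | h
  · exact h
  · have hW0 : Wsum μ S ≤ 0 := by
      have : (ℓ:ℝ) * ((n:ℝ)/ℓ) = n := by field_simp
      linarith [h, this]
    have h1 := Dsum_le hpos S
    have h2 : (0:ℝ) ≤ ∑ u, Wsum μ (insert u S) :=
      Finset.sum_nonneg fun u _ => Wsum_nonneg hpos
    have h3 : Dsum μ S ≤ 0 := by nlinarith [Wsum_nonneg (S := S) hpos]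
    calc Dsum μ S ≤ 0 := h3
      _ ≤ (n:ℝ)^2/ℓ := by positivity

lemma condCov_symm : condCov μ S y u v = condCov μ S y v u := by
  have h : (fun x : Fin n → Bool => spin (x u) * spin (x v))
      = (fun x : Fin n → Bool => spin (x v) * spin (x u)) := by
    funext x; ring
  rw [condCov, condCov, h, mul_comm]

lemma two_pairs_le (hpos : ∀ x, 0 ≤ μ x) (S : Finset (Fin n)) :
    2 * ∑ p ∈ pairs n, (∑ y ∈ reps S, marg μ S y * (condCov μ S y p.1 p.2)^2)
      ≤ Dsum μ S := by
  set t : Fin n × Fin n → ℝ :=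
    fun p => ∑ y ∈ reps S, marg μ S y * (condCov μ S y p.1 p.2)^2 with ht
  have htnn : ∀ p : Fin n × Fin n, 0 ≤ t p := fun p =>
    Finset.sum_nonneg fun y _ => mul_nonneg (marg_nonneg hpos) (sq_nonneg _)
  have hD : Dsum μ S = ∑ p ∈ Finset.univ ×ˢ Finset.univ, t p := by
    rw [Finset.sum_product]; rfl
  set Q : Finset (Fin n × Fin n) := Finset.univ.filter fun p => p.2 < p.1 with hQdef
  have hQ : ∑ p ∈ Q, t p = ∑ p ∈ pairs n, t p := by
    refine Finset.sum_nbij' (i := Prod.swap) (j := Prod.swap) ?_ ?_ ?_ ?_ ?_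
    · intro p hp
      simp only [hQdef, pairs, mem_filter, mem_univ, true_and] at hp ⊢
      exact hp
    · intro p hp
      simp only [hQdef, pairs, mem_filter, mem_univ, true_and] at hp ⊢
      exact hp
    · intro p _; simp
    · intro p _; simp
    · intro p _
      simp only [ht, Prod.fst_swap, Prod.snd_swap]
      exact Finset.sum_congr rfl fun y _ => by rw [condCov_symm]
  have hdisj : Disjoint (pairs n) Q := by
    rw [Finset.disjoint_left]
    intro p hp hq
    simp only [pairs, hQdef, mem_filter, mem_univ, true_and] at hp hq
    exact absurd hq (lt_asymm hp)
  have hsub : pairs n ∪ Q ⊆ Finset.univ ×ˢ Finset.univ := by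
    rw [Finset.univ_product_univ]; exact Finset.subset_univ _
  calc 2 * ∑ p ∈ pairs n, t p = ∑ p ∈ pairs n, t p + ∑ p ∈ Q, t p := by rw [hQ]; ring
    _ = ∑ p ∈ pairs n ∪ Q, t p := (Finset.sum_union hdisj).symm
    _ ≤ ∑ p ∈ Finset.univ ×ˢ Finset.univ, t p :=
        Finset.sum_le_sum_of_subset_of_nonneg hsub fun p _ _ => htnn p
    _ = Dsum μ S := hD.symm

/-- Covariance version of correlation rounding: for any `ℓ ∈ [n]` there is `S` with `|S| ≤ ℓ`
such that `E_{X_S} E_{{u,v}}[Cov(X_u,X_v|X_S)²] ≤ 8 log 2 / ℓ`. -/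
theorem covariance_correlation_rounding {n : ℕ} (μ : (Fin n → Bool) → ℝ) (hμ : IsDist μ)
    (ℓ : ℕ) (hl1 : 1 ≤ ℓ) (hln : ℓ ≤ n) :
    ∃ S : Finset (Fin n), S.card ≤ ℓ ∧
      (∑ y ∈ reps S, marg μ S y *
          ((∑ p ∈ pairs n, (condCov μ S y p.1 p.2) ^ 2) / (n.choose 2 : ℝ)))
        ≤ 8 * Real.log 2 / (ℓ : ℝ) := by
  obtain ⟨hpos, hsum⟩ := hμ
  have hn : 0 < n := lt_of_lt_of_le (Nat.lt_of_lt_of_le Nat.zero_lt_one hl1) hln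
  have hl0 : (0:ℝ) < ℓ := by exact_mod_cast hl1
  have hlog : (0.6931471803:ℝ) < Real.log 2 := Real.log_two_gt_d9
  rcases lt_or_ge n 2 with h2 | h2
  · -- n = 1
    have hp : pairs n = ∅ := by
      ext p
      simp only [pairs, mem_filter, mem_univ, true_and, Finset.notMem_empty, iff_false]
      intro hlt
      rw [Fin.lt_def] at hlt
      have h1 := p.1.2
      have h2' := p.2.2
      omega
    refine ⟨∅, by simp, ?_⟩
    simp only [hp, Finset.sum_empty, zero_div, mul_zero, Finset.sum_const_zero]
    positivity
  · -- n ≥ 2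
    obtain ⟨S, hcard, hD⟩ := exists_small hpos hsum ℓ hl1 hn
    refine ⟨S, hcard, ?_⟩
    have ha : (2:ℝ) ≤ n := by exact_mod_cast h2
    have hC : ((n.choose 2 : ℕ) : ℝ) = n*((n:ℝ)-1)/2 := Nat.cast_choose_two ℝ n
    have hCpos : (0:ℝ) < ((n.choose 2 : ℕ) : ℝ) := by rw [hC]; nlinarith
    have hT : (∑ y ∈ reps S, marg μ S y *
          ((∑ p ∈ pairs n, (condCov μ S y p.1 p.2) ^ 2) / (n.choose 2 : ℝ)))
        = (∑ p ∈ pairs n, ∑ y ∈ reps S, marg μ S y * (condCov μ S y p.1 p.2)^2)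
            / (n.choose 2 : ℝ) := by
      simp only [← mul_div_assoc]
      rw [← Finset.sum_div]
      congr 1
      rw [Finset.sum_comm]
      apply Finset.sum_congr rfl
      intro y _
      rw [Finset.mul_sum]
    rw [hT, div_le_div_iff₀ hCpos hl0]
    have h2p := two_pairs_le hpos S
    have e : ((n:ℝ)^2/ℓ)*ℓ = (n:ℝ)^2 := by field_simp
    have key : 2 * (∑ p ∈ pairs n, ∑ y ∈ reps S, marg μ S y * (condCov μ S y p.1 p.2)^2)
        * ℓ ≤ (n:ℝ)^2 := by
      calc 2 * (∑ p ∈ pairs n, ∑ y ∈ reps S, marg μ S y * (condCov μ S y p.1 p.2)^2) * ℓ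
          ≤ ((n:ℝ)^2/ℓ) * ℓ := mul_le_mul_of_nonneg_right (h2p.trans hD) hl0.le
        _ = (n:ℝ)^2 := e
    rw [hC]
    nlinarith [key, hlog, ha, sq_nonneg ((n:ℝ)-2), hl0]

end
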